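/- For n = 2 qubits, the potential of multipartite entanglement of a uniform state with phases ζ ∈ (S¹)^4 (i.e. z_k = ζ_k/2) equals π_ME(ζ) = 3/4 + (1/4)·Re(ζ_{00} ζ_{11} conj(ζ_{01}) conj(ζ_{10})). Consequently π_ME(ζ) = 1/2 if and only if ζ_{00}·ζ_{11} = −ζ_{01}·ζ_{10}. -/

import Mathlib

set_option maxHeartbeats 1000000


/-- Reduced density matrix of a two-qubit pure state on the first qubit. -/
noncomputable def rho1 (z : Bool → Bool → ℂ) : Matrix Bool Bool ℂ :=
  fun a a' => ∑ b : Bool, z a b * star (z a' b)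

/-- Reduced density matrix of a two-qubit pure state on the second qubit. -/
noncomputable def rho2 (z : Bool → Bool → ℂ) : Matrix Bool Bool ℂ :=
  fun b b' => ∑ a : Bool, z a b * star (z a b')

/-- Potential of multipartite entanglement for `n = 2` qubits: average of the
purities of the two single-qubit subsystems. -/
noncomputable def piME2 (z : Bool → Bool → ℂ) : ℂ :=
  (Matrix.trace (rho1 z ^ 2) + Matrix.trace (rho2 z ^ 2)) / 2

/-- For a uniform two-qubit state `z_k = ζ_k/2` with unimodular phases,
`π_ME(ζ) = 3/4 + (1/4)·Re(ζ₀₀ζ₁₁ conj(ζ₀₁) conj(ζ₁₀))`; consequently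
`π_ME(ζ) = 1/2` iff `ζ₀₀ζ₁₁ = −ζ₀₁ζ₁₀`. -/
theorem piME_two_qubit_uniform (ζ : Bool → Bool → ℂ)
    (hζ : ∀ a b, ‖ζ a b‖ = 1) :
    piME2 (fun a b => ζ a b / 2) =
      3 / 4 + (1 / 4) *
        (((ζ false false * ζ true true * star (ζ false true) * star (ζ true false)).re : ℝ) : ℂ) ∧
    (piME2 (fun a b => ζ a b / 2) = 1 / 2 ↔
      ζ false false * ζ true true = -(ζ false true * ζ true false)) := by
  have hne : ∀ a b, ζ a b ≠ 0 := by
    intro a b h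
    have := hζ a b; rw [h] at this; simp at this
  have hst : ∀ a b, star (ζ a b) = (ζ a b)⁻¹ := by
    intro a b
    refine (inv_eq_of_mul_eq_one_right ?_).symm
    have h1 : Complex.normSq (ζ a b) = 1 := by
      rw [Complex.normSq_eq_norm_sq, hζ]; norm_num
    simp only [Complex.star_def, Complex.mul_conj, h1, Complex.ofReal_one]
  set w : ℂ := ζ false false * ζ true true * star (ζ false true) * star (ζ true false) with hw
  have hwabs : ‖w‖ = 1 := by
    simp [hw, map_mul, hζ]
  have hre : ((w.re : ℝ) : ℂ) = (w + star w) / 2 := by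
    rw [show (star w) = (starRingEnd ℂ) w from rfl, Complex.add_conj]; push_cast; ring
  have hst' : ∀ a b, (starRingEnd ℂ) (ζ a b) = (ζ a b)⁻¹ := hst
  have hkey : piME2 (fun a b => ζ a b / 2) = 3 / 4 + (1 / 4) * ((w + star w) / 2) := by
    simp only [piME2, rho1, rho2, Matrix.trace, Matrix.diag, pow_two, Matrix.mul_apply,
      Fintype.sum_bool, star_div₀, star_mul, star_star, hst, hst', map_inv₀, hw]
    have h00 := hne false false
    have h01 := hne false true
    have h10 := hne true false
    have h11 := hne true true
    field_simp [h00, h01, h10, h11]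
    simp only [one_div, star_inv₀, hst, inv_inv, star_ofNat]
    ring
  refine ⟨by rw [hkey, hre], ?_⟩
  rw [hkey]
  constructor
  · intro h
    have hsum : w + star w = -2 := by linear_combination 8 * h
    have hre2 : w.re = -1 := by
      have h2 := congrArg Complex.re hsum
      simp [Complex.star_def, Complex.add_re, Complex.conj_re] at h2
      linarith
    have him : w.im = 0 := by
      have hn : w.re * w.re + w.im * w.im = 1 := by
        have h3 := Complex.sq_norm w
        rw [hwabs] at h3
        simpa [Complex.normSq_apply] using h3.symm
      nlinarith
    have hwm1 : w = -1 := by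
      apply Complex.ext <;> simp [hre2, him]
    rw [hw, hst, hst] at hwm1
    have h01 := hne false true
    have h10 := hne true false
    field_simp at hwm1
    linear_combination hwm1
  · intro h
    have hwm1 : w = -1 := by
      rw [hw, hst, hst]
      have h01 := hne false true
      have h10 := hne true false
      field_simp
      linear_combination h
    rw [hwm1]
    norm_num
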